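/- arXiv:2411.11127 — 5 statements merged into one kernel-verified Lean document; each statement's English description precedes it below -/
import Mathlib

section
/- Let (M_n, d_n)_{n∈ℕ} and (N_n, ∂_n)_{n∈ℕ} be sequences of nonempty metric spaces of uniformly bounded diameter, let φ : ∏_n M_n/Fin → ∏_n N_n/Fin be a function, and let Φ : ∏_n M_n → ∏_n N_n be a lifting of φ. Then: (i) for every ε ≥ 0, the set 𝒥_prod^ε is an ideal on ℕ containing all finite sets (it contains every finite set, is closed under subsets, and is closed under finite unions); and (ii) 𝒥_prod = ⋂_{ε>0} 𝒥_prod^ε. -/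
open Filter Topology Set

section Defs

variable (M : ℕ → Type*) [∀ n, MetricSpace (M n)]

/-- The relation `a ∼_Fin b` of asymptotic equality: `lim_n d_n(a_n, b_n) = 0`. -/
def finRel (a b : ∀ n, M n) : Prop :=
  Tendsto (fun n => dist (a n) (b n)) atTop (nhds (0 : ℝ))

theorem finRel_refl (a : ∀ n, M n) : finRel M a a := by
  unfold finRel
  have h : (fun n => dist (a n) (a n)) = fun _ => (0 : ℝ) := by funext n; simp
  rw [h]
  exact tendsto_const_nhds

theorem finRel_symm {a b : ∀ n, M n} (h : finRel M a b) : finRel M b a := by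
  unfold finRel at h ⊢
  simpa [dist_comm] using h

theorem finRel_trans {a b c : ∀ n, M n} (hab : finRel M a b) (hbc : finRel M b c) :
    finRel M a c := by
  unfold finRel at hab hbc ⊢
  have h := hab.add hbc
  rw [add_zero] at h
  exact squeeze_zero (fun n => dist_nonneg) (fun n => dist_triangle _ _ _) h

/-- The setoid of asymptotic equality on `∀ n, M n`. -/
def finSetoid : Setoid (∀ n, M n) :=
  ⟨finRel M, ⟨finRel_refl M, finRel_symm M, finRel_trans M⟩⟩

/-- The reduced product `∏ₙ Mₙ / Fin`. -/
abbrev RedProd := Quotient (finSetoid M)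

variable {M}

/-- The class of `a` in the reduced product. -/
def mkRP (a : ∀ n, M n) : RedProd M := Quotient.mk (finSetoid M) a

open Classical in
/-- `limsup` of a real sequence along a subset `S ⊆ ℕ`; by convention it is `0`
if `S` is finite. -/
noncomputable def limsupOn (S : Set ℕ) (f : ℕ → ℝ) : ℝ :=
  if S.Finite then 0 else Filter.limsup f (Filter.atTop ⊓ Filter.principal S)

/-- The pseudometric `d^S` computed on representatives:
`d^S(a,b) = limsup_{n ∈ S} d_n(a_n, b_n)`. -/
noncomputable def dS (S : Set ℕ) (a b : ∀ n, M n) : ℝ :=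
  limsupOn S fun n => dist (a n) (b n)

/-- The pseudometric `d^S` on the reduced product. -/
noncomputable def dSq (S : Set ℕ) (x y : RedProd M) : ℝ :=
  dS S (Quotient.out x) (Quotient.out y)

/-- `x =_S y`, i.e. `d^S(x, y) = 0`. -/
def eqS (S : Set ℕ) (x y : RedProd M) : Prop := dSq S x y = 0

end Defs

/-- Two subsets of `ℕ` are equal modulo finite if their symmetric difference is finite. -/
def EqModFin (S T : Set ℕ) : Prop := (symmDiff S T).Finite

/-- `α : Set ℕ → Set ℕ` is a lift of an automorphism of the Boolean algebra `𝒫(ℕ)/Fin`: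
it respects equality mod finite, is injective and surjective mod finite, and preserves
unions and complements mod finite. -/
def IsFinAut (α : Set ℕ → Set ℕ) : Prop :=
  (∀ S T, EqModFin S T → EqModFin (α S) (α T)) ∧
  (∀ S T, EqModFin (α S) (α T) → EqModFin S T) ∧
  (∀ T, ∃ S, EqModFin (α S) T) ∧
  (∀ S T, EqModFin (α (S ∪ T)) (α S ∪ α T)) ∧
  (∀ S, EqModFin (α Sᶜ) (α S)ᶜ)

section Maps

variable {M N : ℕ → Type*} [∀ n, MetricSpace (M n)] [∀ n, MetricSpace (N n)]

/-- `φ` is coordinate respecting, as witnessed by the automorphism (lifted by) `α`. -/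
def CoordRespectingWith (φ : RedProd M → RedProd N) (α : Set ℕ → Set ℕ) : Prop :=
  IsFinAut α ∧ ∀ (S : Set ℕ) (x y : RedProd M), eqS S x y → eqS (α S) (φ x) (φ y)

/-- `φ` is coordinate respecting. -/
def CoordRespecting (φ : RedProd M → RedProd N) : Prop :=
  ∃ α : Set ℕ → Set ℕ, CoordRespectingWith φ α

/-- `φ` is trivial: there are an almost permutation `f` of `ℕ` (a bijection between the
cofinite sets `D` and `f '' D`) and maps `hₙ : M_{f(n)} → N_n` with
`φ([a]) = [(hₙ(a_{f(n)}))ₙ]` for all `a`. -/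
def TrivialMap (φ : RedProd M → RedProd N) : Prop :=
  ∃ (f : ℕ → ℕ) (D : Set ℕ) (h : ∀ n, M (f n) → N n),
    Dᶜ.Finite ∧ Set.InjOn f D ∧ (f '' D)ᶜ.Finite ∧
    ∀ a : ∀ n, M n, φ (mkRP a) = mkRP fun n => h n (a (f n))

/-- `Φ` is a lifting of `φ`: `φ([a]) = [Φ(a)]` for every `a`. -/
def IsLifting (φ : RedProd M → RedProd N) (Φ : (∀ n, M n) → ∀ n, N n) : Prop :=
  ∀ a : ∀ n, M n, φ (mkRP a) = mkRP (Φ a)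

/-- `(hₙ)` is an `ε`-lifting of product form on `A` (relative to `Φ`):
`limsup_{n ∈ A} ∂ₙ(Φ(a)ₙ, hₙ(aₙ)) ≤ ε` for every `a`. -/
def IsProdLift (Φ : (∀ n, M n) → ∀ n, N n) (ε : ℝ) (A : Set ℕ)
    (h : ∀ n, M n → N n) : Prop :=
  ∀ a : ∀ n, M n, limsupOn A (fun n => dist (Φ a n) (h n (a n))) ≤ ε

/-- `𝒥_prod^ε`: the sets `A ⊆ ℕ` admitting an `ε`-lifting of product form on `A`.
`𝒥_prod` is `Jprod Φ 0`. -/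
def Jprod (Φ : (∀ n, M n) → ∀ n, N n) (ε : ℝ) : Set (Set ℕ) :=
  {A | ∃ h : ∀ n, M n → N n, IsProdLift Φ ε A h}

end Maps

/-- The spaces `Mₙ` have uniformly bounded diameter. -/
def UnifBdd (M : ℕ → Type*) [∀ n, MetricSpace (M n)] : Prop :=
  ∃ K : ℝ, ∀ (n : ℕ) (x y : M n), dist x y ≤ K

/-- The canonical identification of `ℕ → Bool` (Cantor space) with `𝒫(ℕ)`. -/
def funToSet (x : ℕ → Bool) : Set ℕ := {n | x n = true}

/-- A family of subsets of `ℕ` is meager if the corresponding subset of the Cantor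
space `ℕ → Bool` is meager. -/
def MeagerInP (𝒜 : Set (Set ℕ)) : Prop := IsMeagre (funToSet ⁻¹' 𝒜)

/-- An almost disjoint family: infinite sets with pairwise finite intersections. -/
def IsADFamily (𝒜 : Set (Set ℕ)) : Prop :=
  (∀ A ∈ 𝒜, A.Infinite) ∧ ∀ A ∈ 𝒜, ∀ B ∈ 𝒜, A ≠ B → (A ∩ B).Finite

/-- The Open Colouring Axiom: for every separable metrizable `X` and every partition
`[X]² = K₀ ∪ K₁` with `K₀` open (coded by a symmetric open `K ⊆ X × X`), either there
is an uncountable `K₀`-homogeneous set, or `X` is a countable union of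
`K₁`-homogeneous sets. -/
def OCA : Prop :=
  ∀ (X : Type) [TopologicalSpace X] [TopologicalSpace.SeparableSpace X]
    [TopologicalSpace.MetrizableSpace X] (K : Set (X × X)),
    IsOpen K → (∀ x y : X, (x, y) ∈ K → (y, x) ∈ K) →
    (∃ Y : Set X, ¬Y.Countable ∧ ∀ x ∈ Y, ∀ y ∈ Y, x ≠ y → (x, y) ∈ K) ∨
    (∃ C : ℕ → Set X, (⋃ n, C n) = Set.univ ∧
      ∀ n, ∀ x ∈ C n, ∀ y ∈ C n, x ≠ y → (x, y) ∉ K)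

/-- Martin's Axiom for `σ`-linked partial orders: if `P` is a countable union of sets of
pairwise compatible elements, then for every family of at most `ℵ₁` dense subsets of `P`
there is a filter on `P` meeting every member of the family. -/
def MAsigmaLinked : Prop :=
  ∀ (P : Type) [PartialOrder P] (L : ℕ → Set P),
    (⋃ n, L n) = Set.univ →
    (∀ n, ∀ p ∈ L n, ∀ q ∈ L n, ∃ r : P, r ≤ p ∧ r ≤ q) →
    ∀ 𝒟 : Set (Set P),
      (∀ D ∈ 𝒟, ∀ p : P, ∃ q ∈ D, q ≤ p) →
      Cardinal.mk 𝒟 ≤ Cardinal.aleph 1 →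
      ∃ G : Set P, G.Nonempty ∧
        (∀ p ∈ G, ∀ q ∈ G, ∃ r ∈ G, r ≤ p ∧ r ≤ q) ∧
        (∀ p ∈ G, ∀ q : P, p ≤ q → q ∈ G) ∧
        ∀ D ∈ 𝒟, (G ∩ D).Nonempty



section AuxStatement2

private lemma infinite_neBot' {A : Set ℕ} (hA : A.Infinite) :
    (Filter.atTop ⊓ Filter.principal A).NeBot := by
  rw [Filter.inf_principal_neBot_iff]
  intro U hU
  obtain ⟨n, hn⟩ := Filter.mem_atTop_sets.mp hU
  obtain ⟨mm, hmA, hmn⟩ : ∃ m ∈ A, n ≤ m := by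
    by_contra hcon
    push_neg at hcon
    exact hA (Set.Finite.subset (Set.finite_Iio n) fun x hx => hcon x hx)
  exact ⟨mm, hn mm hmn, hmA⟩

private lemma infinite_frequently' {B : Set ℕ} (hB : B.Infinite) :
    ∃ᶠ n in Filter.atTop, n ∈ B := by
  rw [Filter.frequently_atTop]
  intro m
  by_contra hc
  push_neg at hc
  exact hB (Set.Finite.subset (Set.finite_Iio m)
    fun n hn => lt_of_not_ge fun h => hc n h hn)

private lemma eventually_of_limsupOn_le' {A : Set ℕ} {f : ℕ → ℝ} {K c c' : ℝ}
    (hK : ∀ n, f n ≤ K) (h : limsupOn A f ≤ c) (hcc : c < c') :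
    ∀ᶠ n in Filter.atTop, n ∈ A → f n < c' := by
  by_cases hA : A.Finite
  · obtain ⟨m, hm⟩ := hA.bddAbove
    filter_upwards [Filter.eventually_gt_atTop m] with n hn hnA
    exact absurd (hm hnA) (not_le.mpr hn)
  · haveI := infinite_neBot' hA
    unfold limsupOn at h
    rw [if_neg hA] at h
    have h2 := Filter.eventually_lt_of_limsup_lt (lt_of_le_of_lt h hcc)
      (Filter.isBoundedUnder_of ⟨K, hK⟩)
    rw [Filter.eventually_inf_principal] at h2
    exact h2

private lemma limsupOn_le_of_le' {A : Set ℕ} {f : ℕ → ℝ} {c : ℝ} (hc : 0 ≤ c)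
    (h0 : ∀ n, 0 ≤ f n) (h : ∀ᶠ n in Filter.atTop, n ∈ A → f n ≤ c) :
    limsupOn A f ≤ c := by
  unfold limsupOn
  split_ifs with hA
  · exact hc
  · haveI := infinite_neBot' hA
    exact Filter.limsup_le_of_le (Filter.isCoboundedUnder_le_of_le _ h0)
      (Filter.eventually_inf_principal.mpr h)

private lemma limsupOn_le_forall' {A : Set ℕ} {f : ℕ → ℝ} {ε : ℝ} (hε : 0 ≤ ε)
    (h0 : ∀ n, 0 ≤ f n)
    (H : ∀ c, ε < c → ∀ᶠ n in Filter.atTop, n ∈ A → f n ≤ c) :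
    limsupOn A f ≤ ε :=
  le_of_forall_gt_imp_ge_of_dense fun c hc => limsupOn_le_of_le' (hε.trans hc.le) h0 (H c hc)

private lemma tele' {X : Type*} [MetricSpace X] (u : ℕ → X) (p q : ℕ) (hpq : p ≤ q)
    (hstep : ∀ i, p ≤ i → i < q → dist (u i) (u (i + 1)) ≤ 3 * (2:ℝ)⁻¹ ^ i) :
    dist (u p) (u q) ≤ 6 * (2:ℝ)⁻¹ ^ p - 6 * (2:ℝ)⁻¹ ^ q := by
  revert hstep
  induction q, hpq using Nat.le_induction with
  | base => intro _; simp
  | succ q hq ih =>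
    intro hstep
    have h1 := hstep q hq (Nat.lt_succ_self q)
    have h2 : dist (u p) (u (q + 1)) ≤ dist (u p) (u q) + dist (u q) (u (q + 1)) :=
      dist_triangle _ _ _
    have h3 := ih fun i hi hiq => hstep i hi (hiq.trans (Nat.lt_succ_self q))
    have hpow : (2:ℝ)⁻¹ ^ (q + 1) = (2:ℝ)⁻¹ ^ q * 2⁻¹ := pow_succ _ _
    rw [hpow]; linarith

private def Mseq' (m : ℕ → ℕ) : ℕ → ℕ
  | 0 => m 0
  | k + 1 => max (Mseq' m k + 1) (m (k + 1))

private lemma Mseq'_strictMono (m : ℕ → ℕ) : StrictMono (Mseq' m) :=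
  strictMono_nat_of_lt_succ fun k => (Nat.lt_succ_self _).trans_le (le_max_left _ _)

private lemma le_Mseq' (m : ℕ → ℕ) (k : ℕ) : m k ≤ Mseq' m k := by
  cases k with
  | zero => exact le_refl _
  | succ k => exact le_max_right _ _

end AuxStatement2

/-- For every `ε ≥ 0`, `𝒥_prod^ε` is an ideal on `ℕ` containing all finite sets, and
`𝒥_prod = ⋂_{ε > 0} 𝒥_prod^ε`. -/
theorem statement2
    (M N : ℕ → Type*) [∀ n, MetricSpace (M n)] [∀ n, Nonempty (M n)]
    [∀ n, MetricSpace (N n)] [∀ n, Nonempty (N n)]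
    (hM : UnifBdd M) (hN : UnifBdd N)
    (φ : RedProd M → RedProd N) (Φ : (∀ n, M n) → ∀ n, N n)
    (hΦ : IsLifting φ Φ) :
    (∀ ε : ℝ, 0 ≤ ε →
      (∀ A : Set ℕ, A.Finite → A ∈ Jprod Φ ε) ∧
      (∀ A B : Set ℕ, A ⊆ B → B ∈ Jprod Φ ε → A ∈ Jprod Φ ε) ∧
      (∀ A B : Set ℕ, A ∈ Jprod Φ ε → B ∈ Jprod Φ ε → A ∪ B ∈ Jprod Φ ε)) ∧
    Jprod Φ 0 = ⋂ (ε : ℝ) (_ : 0 < ε), Jprod Φ ε := by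
  classical
  obtain ⟨K, hK⟩ := hN
  have hg0 : ∀ (h : ∀ n, M n → N n) (a : ∀ n, M n) (n : ℕ),
      0 ≤ dist (Φ a n) (h n (a n)) := fun _ _ _ => dist_nonneg
  have hgK : ∀ (h : ∀ n, M n → N n) (a : ∀ n, M n) (n : ℕ),
      dist (Φ a n) (h n (a n)) ≤ K := fun h a n => hK n _ _
  have hfin : ∀ (ε : ℝ), 0 ≤ ε → ∀ A : Set ℕ, A.Finite → A ∈ Jprod Φ ε := by
    intro ε hε A hA
    refine ⟨fun n _ => Classical.arbitrary (N n), fun a => ?_⟩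
    unfold limsupOn
    rw [if_pos hA]
    exact hε
  have hsub : ∀ (ε : ℝ), 0 ≤ ε → ∀ A B : Set ℕ, A ⊆ B →
      B ∈ Jprod Φ ε → A ∈ Jprod Φ ε := by
    rintro ε hε A B hAB ⟨h, hh⟩
    refine ⟨h, fun a => ?_⟩
    refine limsupOn_le_forall' hε (hg0 h a) fun c hc => ?_
    filter_upwards [eventually_of_limsupOn_le' (hgK h a) (hh a) hc] with n hn hnA
    exact (hn (hAB hnA)).le
  have hun : ∀ (ε : ℝ), 0 ≤ ε → ∀ A B : Set ℕ, A ∈ Jprod Φ ε →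
      B ∈ Jprod Φ ε → A ∪ B ∈ Jprod Φ ε := by
    rintro ε hε A B ⟨hA, hhA⟩ ⟨hB, hhB⟩
    refine ⟨fun n => if n ∈ A then hA n else hB n, fun a => ?_⟩
    refine limsupOn_le_forall' hε (hg0 _ a) fun c hc => ?_
    filter_upwards [eventually_of_limsupOn_le' (hgK hA a) (hhA a) hc,
      eventually_of_limsupOn_le' (hgK hB a) (hhB a) hc] with n h1 h2 hn
    rcases Classical.em (n ∈ A) with hmem | hmem
    · simpa [if_pos hmem] using (h1 hmem).le
    · have hnB : n ∈ B := hn.resolve_left hmem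
      simpa [if_neg hmem] using (h2 hnB).le
  have hdir : Jprod Φ 0 ⊆ ⋂ (ε : ℝ) (_ : 0 < ε), Jprod Φ ε := by
    rintro A ⟨h, hh⟩
    exact Set.mem_iInter.mpr fun ε => Set.mem_iInter.mpr fun hε =>
      ⟨h, fun a => (hh a).trans hε.le⟩
  have hrev : (⋂ (ε : ℝ) (_ : 0 < ε), Jprod Φ ε) ⊆ Jprod Φ 0 := by
    intro A hA
    by_cases hAfin : A.Finite
    · exact hfin 0 le_rfl A hAfin
    have hmem : ∀ k : ℕ, A ∈ Jprod Φ ((2:ℝ)⁻¹ ^ k) := by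
      intro k
      have h1 := Set.mem_iInter.mp hA ((2:ℝ)⁻¹ ^ k)
      exact Set.mem_iInter.mp h1 (pow_pos (by norm_num) k)
    choose h hh using hmem
    have claim : ∀ k : ℕ, ∃ m : ℕ, ∀ n, m ≤ n → n ∈ A → ∀ x : M n,
        dist (h k n x) (h (k + 1) n x) ≤ 3 * (2:ℝ)⁻¹ ^ k := by
      intro k
      by_contra hc
      push_neg at hc
      set B : Set ℕ := {n | n ∈ A ∧ ∃ x : M n,
        3 * (2:ℝ)⁻¹ ^ k < dist (h k n x) (h (k + 1) n x)} with hBdef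
      have hBinf : B.Infinite := Set.infinite_of_forall_exists_gt fun m => by
        obtain ⟨n, hmn, hnA, hx⟩ := hc (m + 1)
        exact ⟨n, ⟨hnA, hx⟩, lt_of_lt_of_le (Nat.lt_succ_self m) hmn⟩
      set a : ∀ n, M n := fun n => if hn : n ∈ B then Classical.choose hn.2
        else Classical.arbitrary (M n) with hadef
      have hp : (0:ℝ) < (2:ℝ)⁻¹ ^ k := pow_pos (by norm_num) k
      have hp1 : (0:ℝ) < (2:ℝ)⁻¹ ^ (k + 1) := pow_pos (by norm_num) (k + 1)
      have E1 := eventually_of_limsupOn_le' (hgK (h k) a) (hh k a)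
        (show (2:ℝ)⁻¹ ^ k < (3/2) * (2:ℝ)⁻¹ ^ k by linarith)
      have E2 := eventually_of_limsupOn_le' (hgK (h (k + 1)) a) (hh (k + 1) a)
        (show (2:ℝ)⁻¹ ^ (k + 1) < (3/2) * (2:ℝ)⁻¹ ^ (k + 1) by linarith)
      obtain ⟨n, hnB, h1, h2⟩ := ((infinite_frequently' hBinf).and_eventually (E1.and E2)).exists
      have hnA : n ∈ A := hnB.1
      have hd : 3 * (2:ℝ)⁻¹ ^ k < dist (h k n (a n)) (h (k + 1) n (a n)) := by
        have ha : a n = Classical.choose hnB.2 := dif_pos hnB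
        rw [ha]
        exact Classical.choose_spec hnB.2
      have tri : dist (h k n (a n)) (h (k + 1) n (a n)) ≤
          dist (Φ a n) (h k n (a n)) + dist (Φ a n) (h (k + 1) n (a n)) := by
        rw [dist_comm (Φ a n) (h k n (a n))]
        exact dist_triangle _ _ _
      have b1 := h1 hnA
      have b2 := h2 hnA
      have hpow : (2:ℝ)⁻¹ ^ (k + 1) = (2:ℝ)⁻¹ ^ k * 2⁻¹ := pow_succ _ _
      rw [hpow] at b2
      linarith
    choose m hm using claim
    refine ⟨fun n => h (Nat.findGreatest (fun k => Mseq' m k ≤ n) n) n, fun a => ?_⟩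
    refine limsupOn_le_forall' le_rfl (hg0 _ a) fun c hc => ?_
    obtain ⟨j, hj⟩ : ∃ j : ℕ, 8 * (2:ℝ)⁻¹ ^ j < c := by
      obtain ⟨j, hj⟩ := exists_pow_lt_of_lt_one (show (0:ℝ) < c / 8 by linarith)
        (show (2:ℝ)⁻¹ < 1 by norm_num)
      exact ⟨j, by linarith⟩
    have hpj : (0:ℝ) < (2:ℝ)⁻¹ ^ j := pow_pos (by norm_num) j
    have E := eventually_of_limsupOn_le' (hgK (h j) a) (hh j a)
      (show (2:ℝ)⁻¹ ^ j < 2 * (2:ℝ)⁻¹ ^ j by linarith)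
    filter_upwards [E, Filter.eventually_ge_atTop (Mseq' m j)] with n hE hn hnA
    show dist (Φ a n) (h (Nat.findGreatest (fun k => Mseq' m k ≤ n) n) n (a n)) ≤ c
    set q := Nat.findGreatest (fun k => Mseq' m k ≤ n) n with hqdef
    have hjn : j ≤ n := le_trans (Mseq'_strictMono m).le_apply hn
    have hjq : j ≤ q := Nat.le_findGreatest (P := fun k => Mseq' m k ≤ n) hjn hn
    have hMqn : Mseq' m q ≤ n := by
      rw [hqdef]
      exact Nat.findGreatest_spec (P := fun k => Mseq' m k ≤ n) hjn hn
    have hstep : ∀ i, j ≤ i → i < q →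
        dist (h i n (a n)) (h (i + 1) n (a n)) ≤ 3 * (2:ℝ)⁻¹ ^ i := by
      intro i hji hiq
      refine hm i n ?_ hnA (a n)
      calc m i ≤ Mseq' m i := le_Mseq' m i
        _ ≤ Mseq' m q := (Mseq'_strictMono m).monotone hiq.le
        _ ≤ n := hMqn
    have htele := tele' (fun i => h i n (a n)) j q hjq hstep
    have hd : dist (Φ a n) (h q n (a n)) ≤
        dist (Φ a n) (h j n (a n)) + dist (h j n (a n)) (h q n (a n)) :=
      dist_triangle _ _ _
    have hb := hE hnA
    have hq0 : (0:ℝ) < (2:ℝ)⁻¹ ^ q := pow_pos (by norm_num) q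
    linarith
  exact ⟨fun ε hε => ⟨hfin ε hε, hsub ε hε, hun ε hε⟩, Set.Subset.antisymm hdir hrev⟩
end

section
/- Let (M_n, d_n)_{n∈ℕ} be a sequence of countable nonempty metric spaces of uniformly bounded diameter, (N_n, ∂_n)_{n∈ℕ} a sequence of nonempty separable metric spaces of uniformly bounded diameter, φ : ∏_n M_n/Fin → ∏_n N_n/Fin a function, and Φ a lifting of φ. Let ε > 0. Suppose 𝒜, ℬ ⊆ 𝒥_prod are nonmeager subsets of 𝒫(ℕ), and for each C ∈ 𝒜 ∪ ℬ fix a 0-lifting of product form (h_n^C)_{n∈ℕ} on C. Assume there is n₀ such that for all n ≥ n₀, all x ∈ M_n, and all y, z ∈ N_n with ∂_n(y,z) > ε, at least one of the sets {C ∈ 𝒜 : n ∈ C and ∂_n(h_n^C(x), y) ≤ ε/3} and {C ∈ ℬ : n ∈ C and ∂_n(h_n^C(x), z) ≤ ε/3} is meager. Then ℕ ∈ 𝒥_prod^{3ε}. -/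
open Filter Topology Set

lemma isMeagre_of_closed_empty_interior {X : Type*} [TopologicalSpace X] {s : Set X}
    (hc : IsClosed s) (hi : interior s = ∅) : IsMeagre s := by
  rw [isMeagre_iff_countable_union_isNowhereDense]
  exact ⟨{s}, by simp [hc.isNowhereDense_iff.mpr hi], countable_singleton _, by simp⟩

lemma IsMeagre.union' {X : Type*} [TopologicalSpace X] {s t : Set X}
    (hs : IsMeagre s) (ht : IsMeagre t) : IsMeagre (s ∪ t) := by
  rw [IsMeagre, Set.compl_union]; exact Filter.inter_mem hs ht

lemma meagre_eventually_false {E : Set ℕ} (hE : E.Infinite) :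
    IsMeagre {x : ℕ → Bool | {n | n ∈ E ∧ x n = true}.Finite} := by
  have hsub : {x : ℕ → Bool | {n | n ∈ E ∧ x n = true}.Finite} ⊆
      ⋃ m, {x : ℕ → Bool | ∀ n, n ∈ E → m ≤ n → x n = false} := by
    intro x hx
    obtain ⟨m, hm⟩ := hx.bddAbove
    refine mem_iUnion.2 ⟨m + 1, fun n hnE hmn => ?_⟩
    by_contra hfalse
    have hxn : x n = true := by simpa using hfalse
    have := hm (⟨hnE, hxn⟩ : n ∈ {n | n ∈ E ∧ x n = true})
    omega
  refine IsMeagre.mono hsub (isMeagre_iUnion fun m => ?_)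
  have hclosed : IsClosed {x : ℕ → Bool | ∀ n, n ∈ E → m ≤ n → x n = false} := by
    have heq : {x : ℕ → Bool | ∀ n, n ∈ E → m ≤ n → x n = false}
        = ⋂ n, ⋂ (_ : n ∈ E), ⋂ (_ : m ≤ n), (fun x : ℕ → Bool => x n) ⁻¹' {false} := by
      ext x; simp [Set.mem_iInter]
    rw [heq]
    exact isClosed_iInter fun n => isClosed_iInter fun _ => isClosed_iInter fun _ =>
      IsClosed.preimage (continuous_apply n) isClosed_singleton
  refine isMeagre_of_closed_empty_interior hclosed ?_
  rw [Set.eq_empty_iff_forall_notMem]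
  intro x hx
  obtain ⟨I, u, hu, hsub'⟩ := isOpen_pi_iff.1 isOpen_interior x hx
  obtain ⟨n, hnE, hn⟩ := hE.exists_gt (max (I.sup id) m)
  have hnI : n ∉ I := fun hnI =>
    absurd ((Finset.le_sup (f := id) hnI).trans (le_max_left _ _)) (not_le.2 hn)
  have hy : Function.update x n true ∈ Set.pi (↑I : Set ℕ) u := by
    intro i hi
    rw [Function.update_of_ne (by rintro rfl; exact hnI hi)]
    exact (hu i hi).2
  have := interior_subset (hsub' hy)
  have hfalse := this n hnE ((le_max_right _ _).trans hn.le)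
  simp [Function.update_self] at hfalse


lemma meagerInP_inter_finite {E : Set ℕ} (hE : E.Infinite) :
    MeagerInP {C : Set ℕ | (C ∩ E).Finite} := by
  have heq : funToSet ⁻¹' {C : Set ℕ | (C ∩ E).Finite}
      = {x : ℕ → Bool | {n | n ∈ E ∧ x n = true}.Finite} := by
    ext x
    have : funToSet x ∩ E = {n | n ∈ E ∧ x n = true} := by
      ext n; simp [funToSet, and_comm]
    simp only [mem_preimage, mem_setOf_eq, this]
  show IsMeagre _
  rw [heq]
  exact meagre_eventually_false hE

/-- **Uniformization lemma.** If `𝒜, ℬ ⊆ 𝒥_prod` are nonmeager and for all large `n`,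
all `x ∈ Mₙ` and all `ε`-separated `y, z ∈ Nₙ` at least one of the corresponding
approximation sets is meager, then `ℕ ∈ 𝒥_prod^{3ε}`. -/
theorem statement4
    (M N : ℕ → Type*) [∀ n, MetricSpace (M n)] [∀ n, Countable (M n)] [∀ n, Nonempty (M n)]
    [∀ n, MetricSpace (N n)] [∀ n, Nonempty (N n)]
    [∀ n, TopologicalSpace.SeparableSpace (N n)]
    (hM : UnifBdd M) (hN : UnifBdd N)
    (φ : RedProd M → RedProd N) (Φ : (∀ n, M n) → ∀ n, N n)
    (hΦ : IsLifting φ Φ) (ε : ℝ) (hε : 0 < ε)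
    (𝒜 ℬ : Set (Set ℕ)) (h𝒜J : 𝒜 ⊆ Jprod Φ 0) (hℬJ : ℬ ⊆ Jprod Φ 0)
    (h𝒜m : ¬MeagerInP 𝒜) (hℬm : ¬MeagerInP ℬ)
    (h : Set ℕ → ∀ n, M n → N n)
    (hlift : ∀ C ∈ 𝒜 ∪ ℬ, IsProdLift Φ 0 C (h C))
    (hmeag : ∃ n₀ : ℕ, ∀ n ≥ n₀, ∀ x : M n, ∀ y z : N n, ε < dist y z →
      MeagerInP {C ∈ 𝒜 | n ∈ C ∧ dist (h C n x) y ≤ ε / 3} ∨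
      MeagerInP {C ∈ ℬ | n ∈ C ∧ dist (h C n x) z ≤ ε / 3}) :
    Set.univ ∈ Jprod Φ (3 * ε) := by
    classical
  obtain ⟨K, hK⟩ := hN
  obtain ⟨n₀, hmeag⟩ := hmeag
  have hEfin : {n : ℕ | MeagerInP {C ∈ 𝒜 | n ∈ C}}.Finite := by
    rw [← Set.not_infinite]
    intro hE
    apply h𝒜m
    have hsub : 𝒜 ⊆ {C : Set ℕ | (C ∩ {n : ℕ | MeagerInP {C ∈ 𝒜 | n ∈ C}}).Finite} ∪
        ⋃ n, {C : Set ℕ | MeagerInP {C ∈ 𝒜 | n ∈ C} ∧ C ∈ 𝒜 ∧ n ∈ C} := by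
      intro C hC
      by_cases hfin : (C ∩ {n : ℕ | MeagerInP {C ∈ 𝒜 | n ∈ C}}).Finite
      · exact Or.inl hfin
      · have hinf : Set.Infinite (C ∩ {n : ℕ | MeagerInP {C ∈ 𝒜 | n ∈ C}}) := hfin
        obtain ⟨n, hnC, hnE⟩ := hinf.nonempty
        exact Or.inr (mem_iUnion.2 ⟨n, hnE, hC, hnC⟩)
    show IsMeagre _
    refine IsMeagre.mono (preimage_mono hsub) ?_
    rw [preimage_union, preimage_iUnion]
    refine IsMeagre.union' (meagerInP_inter_finite hE) (isMeagre_iUnion fun n => ?_)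
    by_cases hn : MeagerInP {C ∈ 𝒜 | n ∈ C}
    · refine IsMeagre.mono (preimage_mono ?_) hn
      rintro C ⟨_, hC, hnC⟩; exact ⟨hC, hnC⟩
    · have : {C : Set ℕ | MeagerInP {C ∈ 𝒜 | n ∈ C} ∧ C ∈ 𝒜 ∧ n ∈ C} = ∅ := by
        ext C; simp [hn]
      rw [this, preimage_empty]; exact IsMeagre.empty
  obtain ⟨n₁, hn₁⟩ : ∃ n₁ : ℕ, ∀ n, n₁ ≤ n → ¬ MeagerInP {C ∈ 𝒜 | n ∈ C} := by
    obtain ⟨m, hm⟩ := hEfin.bddAbove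
    exact ⟨m + 1, fun n hn hmem => absurd (hm hmem) (by omega)⟩
  have hex : ∀ n : ℕ, ¬ MeagerInP {C ∈ 𝒜 | n ∈ C} → ∀ x : M n,
      ∃ y : N n, ¬ MeagerInP {C ∈ 𝒜 | n ∈ C ∧ dist (h C n x) y ≤ ε / 3} := by
    intro n hn x
    by_contra hno
    push_neg at hno
    apply hn
    obtain ⟨s, hsc, hsd⟩ := TopologicalSpace.exists_countable_dense (N n)
    obtain ⟨y, hy⟩ := Set.Countable.exists_eq_range hsc hsd.nonempty
    have hsub : {C ∈ 𝒜 | n ∈ C} ⊆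
        ⋃ k, {C ∈ 𝒜 | n ∈ C ∧ dist (h C n x) (y k) ≤ ε / 3} := by
      rintro C ⟨hC, hnC⟩
      obtain ⟨q, hqs, hq⟩ := hsd.exists_dist_lt (h C n x) (by linarith : (0:ℝ) < ε / 3)
      rw [hy] at hqs
      obtain ⟨k, rfl⟩ := hqs
      exact mem_iUnion.2 ⟨k, hC, hnC, hq.le⟩
    show IsMeagre _
    refine IsMeagre.mono (preimage_mono hsub) ?_
    rw [preimage_iUnion]
    exact isMeagre_iUnion fun k => hno (y k)
  set g : ∀ n, M n → N n := fun n x =>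
    if hn : ∃ y : N n, ¬ MeagerInP {C ∈ 𝒜 | n ∈ C ∧ dist (h C n x) y ≤ ε / 3}
    then hn.choose else Classical.arbitrary (N n) with hgdef
  have hg : ∀ n, n₁ ≤ n → ∀ x : M n,
      ¬ MeagerInP {C ∈ 𝒜 | n ∈ C ∧ dist (h C n x) (g n x) ≤ ε / 3} := by
    intro n hn x
    have hx := hex n (hn₁ n hn) x
    simp only [hgdef]
    rw [dif_pos hx]
    exact hx.choose_spec
  refine ⟨g, fun a => ?_⟩
  rw [limsupOn, if_neg Set.infinite_univ, principal_univ, inf_top_eq]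
  by_contra hcon
  have hDinf : {n : ℕ | 3 * ε < dist (Φ a n) (g n (a n))}.Infinite := by
    intro hfin
    apply hcon
    obtain ⟨m, hm⟩ := hfin.bddAbove
    refine limsup_le_of_le (isCoboundedUnder_le_of_le atTop fun n => dist_nonneg) ?_
    refine eventually_atTop.2 ⟨m + 1, fun n hn => ?_⟩
    by_contra hgt
    exact absurd (hm (show n ∈ _ from not_le.1 hgt)) (by omega)
  set D : Set ℕ := {n : ℕ | 3 * ε < dist (Φ a n) (g n (a n))} \ Set.Iio (max n₀ n₁)
    with hDdef
  have hD : D.Infinite := hDinf.diff (Set.finite_Iio _)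
  set B : ℕ → Set (Set ℕ) :=
    fun n => {C ∈ ℬ | n ∈ C ∧ dist (h C n (a n)) (Φ a n) ≤ ε / 3} with hBdef
  have hBmeag : ∀ n ∈ D, MeagerInP (B n) := by
    intro n hn
    have hn' : max n₀ n₁ ≤ n := not_lt.1 hn.2
    have hdist : ε < dist (g n (a n)) (Φ a n) := by
      have h3 : 3 * ε < dist (Φ a n) (g n (a n)) := hn.1
      rw [dist_comm]; linarith
    rcases hmeag n ((le_max_left _ _).trans hn') (a n) (g n (a n)) (Φ a n) hdist with hc | hc
    · exact absurd hc (hg n ((le_max_right _ _).trans hn') (a n))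
    · exact hc
  have hcover : ℬ ⊆ {C : Set ℕ | (C ∩ D).Finite} ∪ ⋃ n, {C : Set ℕ | n ∈ D ∧ C ∈ B n} := by
    intro C hC
    by_cases hfin : (C ∩ D).Finite
    · exact Or.inl hfin
    · right
      have hCinf : ¬ C.Finite := fun hf => hfin (hf.inter_of_left D)
      have hlim := hlift C (Or.inr hC) a
      rw [limsupOn, if_neg hCinf] at hlim
      have hbdd : IsBoundedUnder (· ≤ ·) (atTop ⊓ 𝓟 C)
          (fun n => dist (Φ a n) (h C n (a n))) :=
        Filter.isBoundedUnder_of ⟨K, fun n => hK n _ _⟩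
      have hev := eventually_lt_of_limsup_lt
        (lt_of_le_of_lt hlim (by linarith : (0:ℝ) < ε / 3)) hbdd
      rw [eventually_inf_principal] at hev
      have hfreq : ∃ᶠ n in atTop, n ∈ C ∩ D :=
        Nat.frequently_atTop_iff_infinite.2 hfin
      obtain ⟨n, hnCD, himp⟩ := (hfreq.and_eventually hev).exists
      refine mem_iUnion.2 ⟨n, hnCD.2, hC, hnCD.1, ?_⟩
      rw [dist_comm]
      exact (himp hnCD.1).le
  apply hℬm
  show IsMeagre _
  refine IsMeagre.mono (preimage_mono hcover) ?_
  rw [preimage_union, preimage_iUnion]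
  refine IsMeagre.union' (meagerInP_inter_finite hD) (isMeagre_iUnion fun n => ?_)
  by_cases hn : n ∈ D
  · refine IsMeagre.mono (preimage_mono ?_) (hBmeag n hn)
    rintro C ⟨_, hB⟩; exact hB
  · have : {C : Set ℕ | n ∈ D ∧ C ∈ B n} = ∅ := by ext C; simp [hn]
    rw [this, preimage_empty]; exact IsMeagre.empty
end

section
/- Let (M_n, d_n)_{n∈ℕ} and (N_n, ∂_n)_{n∈ℕ} be sequences of nonempty metric spaces of uniformly bounded diameter and Φ : ∏_n M_n → ∏_n N_n any function. Let A, B ⊆ ℕ, and let (h_n^A)_{n∈ℕ} and (h_n^B)_{n∈ℕ} be 0-liftings of product form on A and on B respectively (relative to Φ). Then for every ε > 0 the set Diff_ε(h^A, h^B) = {n ∈ A ∩ B : ∃x ∈ M_n with ∂_n(h_n^A(x), h_n^B(x)) > ε} is finite. -/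
open Filter Topology Set

/-- **Coherence.** If `(hₙ^A)` and `(hₙ^B)` are 0-liftings of product form on `A` and `B`
(relative to the same `Φ`), then for every `ε > 0` the set `Diff_ε(h^A, h^B)` is finite. -/
theorem statement6
    (M N : ℕ → Type*) [∀ n, MetricSpace (M n)] [∀ n, Nonempty (M n)]
    [∀ n, MetricSpace (N n)] [∀ n, Nonempty (N n)]
    (hM : UnifBdd M) (hN : UnifBdd N)
    (Φ : (∀ n, M n) → ∀ n, N n) (A B : Set ℕ)
    (hA : ∀ n, M n → N n) (hB : ∀ n, M n → N n)
    (hAl : IsProdLift Φ 0 A hA) (hBl : IsProdLift Φ 0 B hB)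
    (ε : ℝ) (hε : 0 < ε) :
    {n | n ∈ A ∩ B ∧ ∃ x : M n, ε < dist (hA n x) (hB n x)}.Finite := by
  classical
  by_contra hfin
  set S := {n | n ∈ A ∩ B ∧ ∃ x : M n, ε < dist (hA n x) (hB n x)} with hSdef
  have hSinf : S.Infinite := hfin
  have hSA : S ⊆ A := fun n hn => hn.1.1
  have hSB : S ⊆ B := fun n hn => hn.1.2
  have hAinf : A.Infinite := hSinf.mono hSA
  have hBinf : B.Infinite := hSinf.mono hSB
  obtain ⟨K, hK⟩ := hN
  -- choose witnesses
  let a : ∀ n, M n := fun n => if h : n ∈ S then h.2.choose else Classical.arbitrary (M n)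
  have ha : ∀ n ∈ S, ε < dist (hA n (a n)) (hB n (a n)) := by
    intro n hn
    simp only [a, dif_pos hn]
    exact hn.2.choose_spec
  set g : ℕ → ℝ := fun n => dist (Φ a n) (hA n (a n)) with hg
  set g' : ℕ → ℝ := fun n => dist (Φ a n) (hB n (a n)) with hg'
  set l : Filter ℕ := atTop ⊓ Filter.principal S with hl
  have hlneBot : l.NeBot := by
    rw [hl, ← Nat.cofinite_eq_atTop]
    exact Filter.cofinite_inf_principal_neBot_iff.mpr hSinf
  have hb : ∀ (u : ℕ → ℝ) (F : Filter ℕ), (∀ n, 0 ≤ u n) → (∀ n, u n ≤ K) →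
      F.IsBoundedUnder (· ≤ ·) u ∧ F.IsBoundedUnder (· ≥ ·) u := by
    intro u F h0 hK'
    exact ⟨Filter.isBoundedUnder_of ⟨K, hK'⟩, Filter.isBoundedUnder_of ⟨0, h0⟩⟩
  have hgK : ∀ n, g n ≤ K := fun n => hK _ _ _
  have hg'K : ∀ n, g' n ≤ K := fun n => hK _ _ _
  have hg0 : ∀ n, 0 ≤ g n := fun n => dist_nonneg
  have hg'0 : ∀ n, 0 ≤ g' n := fun n => dist_nonneg
  -- limsup of g along l is ≤ 0
  have key : ∀ (u : ℕ → ℝ) (C : Set ℕ), S ⊆ C → C.Infinite → (∀ n, 0 ≤ u n) →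
      (∀ n, u n ≤ K) → limsupOn C u ≤ 0 → Filter.limsup u l ≤ 0 := by
    intro u C hSC hCinf h0 hK' hC
    have hle : l ≤ atTop ⊓ Filter.principal C :=
      inf_le_inf_left _ (Filter.principal_mono.mpr hSC)
    have h1 : Filter.limsup u l ≤ Filter.limsup u (atTop ⊓ Filter.principal C) := by
      have hCne : (atTop ⊓ Filter.principal C).NeBot := by
        rw [← Nat.cofinite_eq_atTop]
        exact Filter.cofinite_inf_principal_neBot_iff.mpr hCinf
      exact Filter.limsup_le_limsup_of_le hle
        ((hb u l h0 hK').2.isCoboundedUnder_le)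
        (hb u _ h0 hK').1
    refine h1.trans ?_
    rw [limsupOn, if_neg hCinf ] at hC
    exact hC
  have hgl : Filter.limsup g l ≤ 0 := key g A hSA hAinf hg0 hgK (hAl a)
  have hg'l : Filter.limsup g' l ≤ 0 := key g' B hSB hBinf hg'0 hg'K (hBl a)
  have hsum : Filter.limsup (g + g') l ≤ 0 := by
    have := limsup_add_le (f := l) (u := g) (v := g')
      (hb g l hg0 hgK).2 (hb g l hg0 hgK).1
      ((hb g' l hg'0 hg'K).2.isCoboundedUnder_le) (hb g' l hg'0 hg'K).1
    calc Filter.limsup (g + g') l ≤ Filter.limsup g l + Filter.limsup g' l := this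
      _ ≤ 0 + 0 := add_le_add hgl hg'l
      _ = 0 := by ring
  have hfreq : ∃ᶠ n in l, ε ≤ (g + g') n := by
    apply Filter.Eventually.frequently
    have hmem : S ∈ l := by
      rw [hl]
      exact Filter.mem_inf_of_right (Filter.mem_principal_self S)
    filter_upwards [hmem] with n hn
    have h1 : dist (hA n (a n)) (hB n (a n)) ≤ g n + g' n := by
      rw [hg, hg']
      calc dist (hA n (a n)) (hB n (a n))
          ≤ dist (hA n (a n)) (Φ a n) + dist (Φ a n) (hB n (a n)) := dist_triangle _ _ _
        _ = dist (Φ a n) (hA n (a n)) + dist (Φ a n) (hB n (a n)) := by rw [dist_comm]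
    exact le_trans (le_of_lt (ha n hn)) h1
  have : ε ≤ Filter.limsup (g + g') l := by
    refine Filter.le_limsup_of_frequently_le hfreq ?_
    exact Filter.isBoundedUnder_of ⟨2 * K, fun n => by
      have := add_le_add (hgK n) (hg'K n); simpa [two_mul] using this⟩
  linarith
end

section
/- Let (M_n, d_n)_{n∈ℕ} and (N_n, ∂_n)_{n∈ℕ} be sequences of nonempty metric spaces of uniformly bounded diameter, and let φ : ∏_n M_n/Fin → ∏_n N_n/Fin be a function. For each n let P_n, Q_n ⊆ M_n be finite subsets with P_n ∩ Q_n ≠ ∅, and let h_n : P_n → N_n and h'_n : Q_n → N_n be maps such that φ([a]) = [(h_n(a_n))_n] for every a ∈ ∏_n P_n and φ([a]) = [(h'_n(a_n))_n] for every a ∈ ∏_n Q_n. Then for every ε > 0 there is n₀ such that for all n ≥ n₀ and all x ∈ P_n ∩ Q_n, ∂_n(h_n(x), h'_n(x)) < ε. -/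
open Filter Topology Set

/-- **Coherence for partial finite liftings.** If `hₙ : Pₙ → Nₙ` and `h'ₙ : Qₙ → Nₙ` both
lift `φ` on the respective subproducts of finite sets with `Pₙ ∩ Qₙ ≠ ∅`, then for every
`ε > 0` eventually `∂ₙ(hₙ(x), h'ₙ(x)) < ε` for all `x ∈ Pₙ ∩ Qₙ`. -/
theorem statement10
    (M N : ℕ → Type*) [∀ n, MetricSpace (M n)] [∀ n, Nonempty (M n)]
    [∀ n, MetricSpace (N n)] [∀ n, Nonempty (N n)]
    (hM : UnifBdd M) (hN : UnifBdd N)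
    (φ : RedProd M → RedProd N)
    (P Q : ∀ n, Set (M n)) (hPfin : ∀ n, (P n).Finite) (hQfin : ∀ n, (Q n).Finite)
    (hPQ : ∀ n, (P n ∩ Q n).Nonempty)
    (h : ∀ n, P n → N n) (h' : ∀ n, Q n → N n)
    (hh : ∀ (a : ∀ n, M n) (ha : ∀ n, a n ∈ P n),
      φ (mkRP a) = mkRP fun n => h n ⟨a n, ha n⟩)
    (hh' : ∀ (a : ∀ n, M n) (ha : ∀ n, a n ∈ Q n),
      φ (mkRP a) = mkRP fun n => h' n ⟨a n, ha n⟩) :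
    ∀ ε : ℝ, 0 < ε → ∃ n₀ : ℕ, ∀ n ≥ n₀, ∀ x : M n,
      ∀ (hx : x ∈ P n) (hx' : x ∈ Q n),
        dist (h n ⟨x, hx⟩) (h' n ⟨x, hx'⟩) < ε := by
  intro ε hε
  by_contra hcon
  push_neg at hcon
  classical
  set bad : ℕ → Prop := fun n => ∃ x : M n, ∃ hx : x ∈ P n, ∃ hx' : x ∈ Q n,
      ε ≤ dist (h n ⟨x, hx⟩) (h' n ⟨x, hx'⟩) with hbaddef
  have key : ∀ n, ∃ x : M n, ∃ hx : x ∈ P n, ∃ hx' : x ∈ Q n,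
      (bad n → ε ≤ dist (h n ⟨x, hx⟩) (h' n ⟨x, hx'⟩)) := by
    intro n
    by_cases hb : bad n
    · obtain ⟨x, hx, hx', hd⟩ := hb
      exact ⟨x, hx, hx', fun _ => hd⟩
    · obtain ⟨x, hx⟩ := hPQ n
      exact ⟨x, hx.1, hx.2, fun hb' => absurd hb' hb⟩
  choose a haP haQ hd using key
  have heq : mkRP (fun n => h n ⟨a n, haP n⟩) = mkRP (fun n => h' n ⟨a n, haQ n⟩) :=
    (hh a haP).symm.trans (hh' a haQ)
  have hfin : finRel N (fun n => h n ⟨a n, haP n⟩) (fun n => h' n ⟨a n, haQ n⟩) :=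
    Quotient.exact heq
  have hev : ∀ᶠ n in atTop,
      dist (h n ⟨a n, haP n⟩) (h' n ⟨a n, haQ n⟩) < ε :=
    hfin.eventually_lt_const hε
  obtain ⟨n₀, hn₀⟩ := Filter.eventually_atTop.mp hev
  obtain ⟨n, hn, x, hx, hx', hge⟩ := hcon n₀
  have hbn : bad n := ⟨x, hx, hx', hge⟩
  exact absurd (hn₀ n hn) (not_lt.mpr (hd n hbn))
end

section
/- Assume that every subset of ℕ^ℕ of cardinality ℵ₁ is bounded in the order of eventual domination ≤* (i.e., the bounding number 𝔟 is greater than ℵ₁). Let (M_n, d_n)_{n∈ℕ} be a sequence of countable nonempty metric spaces of uniformly bounded diameter with fixed enumerations M_n = {x_{n,k} : k ∈ ℕ}, and set M_{n,m} = {x_{n,i} : i ≤ m}. Let (N_n, ∂_n)_{n∈ℕ} be a sequence of nonempty separable metric spaces of uniformly bounded diameter, let φ : ∏_n M_n/Fin → ∏_n N_n/Fin be a function, and for each f ∈ ℕ^ℕ let (h_{n,f})_{n∈ℕ} be maps h_{n,f} : M_{n,f(n)} → N_n such that φ([a]) = [(h_{n,f}(a_n))_n] for every a ∈ ∏_n M_{n,f(n)}.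 Fix ε > 0. Then there is no uncountable set H ⊆ ℕ^ℕ such that for all distinct f, g ∈ H there exist n ∈ ℕ and x ∈ M_{n,f(n)} ∩ M_{n,g(n)} with ∂_n(h_{n,f}(x), h_{n,g}(x)) > ε. -/
open Filter Topology Set

/-- The finite initial segments `M_{n,m} = {x_{n,i} : i ≤ m}` of enumerated countable
spaces. -/
def Mseg {M : ℕ → Type*} (x : ∀ n, ℕ → M n) (n m : ℕ) : Set (M n) :=
  {y | ∃ i ≤ m, x n i = y}

private lemma subtype_app_congr {β γ : Type*} {S : Set β} (h : S → γ)
    {a b : β} (pa : a ∈ S) (pb : b ∈ S) (e : a = b) :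
    h ⟨a, pa⟩ = h ⟨b, pb⟩ := by subst e; rfl

/-- Assume `𝔟 > ℵ₁`. Given liftings `h_{n,f}` of `φ` on each `∏ₙ M_{n,f(n)}` and `ε > 0`,
there is no uncountable `H ⊆ ℕ^ℕ` any two distinct members of which `ε`-disagree at some
common point. -/
theorem statement12
    (hb : ∀ F : Set (ℕ → ℕ), Cardinal.mk F = Cardinal.aleph 1 →
      ∃ g : ℕ → ℕ, ∀ f ∈ F, ∀ᶠ n in Filter.atTop, f n ≤ g n)
    (M N : ℕ → Type*) [∀ n, MetricSpace (M n)] [∀ n, Countable (M n)] [∀ n, Nonempty (M n)]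
    [∀ n, MetricSpace (N n)] [∀ n, Nonempty (N n)]
    [∀ n, TopologicalSpace.SeparableSpace (N n)]
    (hM : UnifBdd M) (hN : UnifBdd N)
    (x : ∀ n, ℕ → M n) (hx : ∀ n, Function.Surjective (x n))
    (φ : RedProd M → RedProd N)
    (h : ∀ (f : ℕ → ℕ) (n : ℕ), Mseg x n (f n) → N n)
    (hlift : ∀ (f : ℕ → ℕ) (a : ∀ n, M n) (ha : ∀ n, a n ∈ Mseg x n (f n)),
      φ (mkRP a) = mkRP fun n => h f n ⟨a n, ha n⟩)
    (ε : ℝ) (hε : 0 < ε) :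
    ¬∃ H : Set (ℕ → ℕ), ¬H.Countable ∧
      ∀ f ∈ H, ∀ g ∈ H, f ≠ g →
        ∃ (n : ℕ) (y : M n) (hy : y ∈ Mseg x n (f n)) (hy' : y ∈ Mseg x n (g n)),
          ε < dist (h f n ⟨y, hy⟩) (h g n ⟨y, hy'⟩) := by
  classical
  rintro ⟨H, hHc, hdis⟩
  -- dense sequences in the `N n`
  obtain ⟨u, hu⟩ : ∃ u : ∀ n, ℕ → N n, ∀ n, DenseRange (u n) := by
    choose u hu using fun n => TopologicalSpace.exists_dense_seq (N n)
    exact ⟨u, hu⟩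
  -- a subset of `H` of cardinality `ℵ₁`
  have hsub : Cardinal.aleph 1 ≤ Cardinal.mk H := by
    rw [← Cardinal.succ_aleph0]
    refine Order.succ_le_of_lt ?_
    rw [lt_iff_not_ge]
    intro hle
    exact hHc (Set.countable_coe_iff.mp (Cardinal.mk_le_aleph0_iff.mp hle))
  obtain ⟨F, hFH, hF⟩ := Cardinal.le_mk_iff_exists_subset.mp hsub
  obtain ⟨g, hg⟩ := hb F hF
  -- the key claim: beyond some point, `h f` agrees with `h g` up to `ε/2`
  have key : ∀ f ∈ F, ∃ k : ℕ, ∀ n, k ≤ n → f n ≤ g n ∧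
      ∀ i, i ≤ f n → ∀ (p : x n i ∈ Mseg x n (f n)) (q : x n i ∈ Mseg x n (g n)),
        dist (h f n ⟨x n i, p⟩) (h g n ⟨x n i, q⟩) ≤ ε / 2 := by
    intro f hf
    set Bad : Set ℕ := {n | f n ≤ g n ∧ ∃ i, i ≤ f n ∧
      ∀ (p : x n i ∈ Mseg x n (f n)) (q : x n i ∈ Mseg x n (g n)),
        ε / 2 < dist (h f n ⟨x n i, p⟩) (h g n ⟨x n i, q⟩)} with hBadDef
    have hfin : Bad.Finite := by
      by_contra hBad
      have hBadInf : Bad.Infinite := hBad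
      have pick : ∀ n ∈ Bad, ∃ i, i ≤ f n ∧
          ∀ (p : x n i ∈ Mseg x n (f n)) (q : x n i ∈ Mseg x n (g n)),
            ε / 2 < dist (h f n ⟨x n i, p⟩) (h g n ⟨x n i, q⟩) := fun n hn => hn.2
      choose I hI1 hI2 using pick
      set a : ∀ n, M n := fun n => if hn : n ∈ Bad then x n (I n hn) else x n 0 with ha
      have haf : ∀ n, a n ∈ Mseg x n (f n) := by
        intro n
        by_cases hn : n ∈ Bad
        · rw [ha]; simp only [dif_pos hn]; exact ⟨_, hI1 n hn, rfl⟩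
        · rw [ha]; simp only [dif_neg hn]; exact ⟨0, Nat.zero_le _, rfl⟩
      have hag : ∀ n, a n ∈ Mseg x n (g n) := by
        intro n
        by_cases hn : n ∈ Bad
        · rw [ha]; simp only [dif_pos hn]; exact ⟨_, (hI1 n hn).trans hn.1, rfl⟩
        · rw [ha]; simp only [dif_neg hn]; exact ⟨0, Nat.zero_le _, rfl⟩
      have heq := (hlift f a haf).symm.trans (hlift g a hag)
      have hrel : finRel N (fun n => h f n ⟨a n, haf n⟩) (fun n => h g n ⟨a n, hag n⟩) :=
        Quotient.exact heq
      unfold finRel at hrel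
      have hev := hrel.eventually (gt_mem_nhds (by linarith : (0:ℝ) < ε / 2))
      rw [eventually_atTop] at hev
      obtain ⟨k, hk⟩ := hev
      obtain ⟨n, hnB, hnk⟩ := hBadInf.exists_gt k
      have hd := hk n hnk.le
      have han : a n = x n (I n hnB) := dif_pos hnB
      have Ef : h f n ⟨a n, haf n⟩ = h f n ⟨x n (I n hnB), ⟨_, hI1 n hnB, rfl⟩⟩ :=
        subtype_app_congr (h f n) _ _ han
      have Eg : h g n ⟨a n, hag n⟩ = h g n ⟨x n (I n hnB), ⟨_, (hI1 n hnB).trans hnB.1, rfl⟩⟩ :=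
        subtype_app_congr (h g n) _ _ han
      have hd' : dist (h f n ⟨a n, haf n⟩) (h g n ⟨a n, hag n⟩) < ε / 2 := hd
      rw [Ef, Eg] at hd'
      clear hd
      have hd := hd'
      exact absurd hd (not_lt.mpr (hI2 n hnB _ _).le)
    obtain ⟨k1, hk1⟩ := eventually_atTop.mp (hg f hf)
    obtain ⟨b, hbA⟩ := hfin.bddAbove
    refine ⟨max k1 (b + 1), fun n hn => ?_⟩
    have hfg : f n ≤ g n := hk1 n (le_trans (le_max_left _ _) hn)
    refine ⟨hfg, fun i hi p q => ?_⟩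
    by_contra hlt
    push_neg at hlt
    have hnB : n ∈ Bad := ⟨hfg, i, hi, fun p' q' => hlt⟩
    have h1 : n ≤ b := hbA hnB
    have h2 : b + 1 ≤ n := le_trans (le_max_right _ _) hn
    omega
  -- choice functions on the subtype `↥F`
  have keyF : ∀ f : F, ∃ k : ℕ, ∀ n, k ≤ n → (f : ℕ → ℕ) n ≤ g n ∧
      ∀ i, i ≤ (f : ℕ → ℕ) n → ∀ (p : x n i ∈ Mseg x n ((f : ℕ → ℕ) n))
        (q : x n i ∈ Mseg x n (g n)),
        dist (h f n ⟨x n i, p⟩) (h g n ⟨x n i, q⟩) ≤ ε / 2 := fun f => key f.1 f.2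
  choose K hK using keyF
  have hcode : ∀ (f : F) (n i : ℕ), ∃ j : ℕ,
      dist (h f n ⟨x n (min i ((f : ℕ → ℕ) n)), ⟨_, min_le_right _ _, rfl⟩⟩) (u n j) < ε / 2 :=
    fun f n i => (hu n).exists_dist_lt _ (by linarith)
  choose c hc using hcode
  -- the countable trace
  set T : F → ℕ × List ℕ × List (List ℕ) := fun f =>
    (K f, (List.range (K f)).map (f : ℕ → ℕ),
      (List.range (K f)).map fun m => (List.range ((f : ℕ → ℕ) m + 1)).map fun i => c f m i)
    with hT
  have hTninj : ¬Function.Injective T := by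
    intro hinj
    have hle : Cardinal.mk F ≤ Cardinal.aleph0 :=
      le_trans (Cardinal.mk_le_of_injective hinj) Cardinal.mk_le_aleph0
    rw [hF] at hle
    exact absurd hle (not_le.mpr Cardinal.aleph0_lt_aleph_one)
  rw [Function.not_injective_iff] at hTninj
  obtain ⟨f, f', hTeq, hne⟩ := hTninj
  have ek : K f = K f' := congrArg Prod.fst hTeq
  have elist : (List.range (K f)).map (f : ℕ → ℕ) = (List.range (K f')).map (f' : ℕ → ℕ) :=
    congrArg (fun t => t.2.1) hTeq
  have ecodes : ((List.range (K f)).map fun m => (List.range ((f : ℕ → ℕ) m + 1)).map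
        fun i => c f m i) =
      ((List.range (K f')).map fun m => (List.range ((f' : ℕ → ℕ) m + 1)).map
        fun i => c f' m i) :=
    congrArg (fun t => t.2.2) hTeq
  have hfval : ∀ m, m < K f → (f : ℕ → ℕ) m = (f' : ℕ → ℕ) m := by
    intro m hm
    have hm' : m < K f' := ek ▸ hm
    have := congrArg (fun l => l[m]?) elist
    simpa [List.getElem?_map, List.getElem?_range, hm, hm'] using this
  have hcval : ∀ m, m < K f → ∀ i, i ≤ (f : ℕ → ℕ) m → c f m i = c f' m i := by
    intro m hm i hi
    have hm' : m < K f' := ek ▸ hm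
    have h0 := congrArg (fun l => l[m]?) ecodes
    simp only [List.getElem?_map, List.getElem?_range, hm, hm', if_pos,
      Option.map_some] at h0
    have h1 : ((List.range ((f : ℕ → ℕ) m + 1)).map fun i => c f m i) =
        (List.range ((f' : ℕ → ℕ) m + 1)).map fun i => c f' m i := by
      simpa [List.getElem?_range, hm, hm'] using h0
    have h2 := congrArg (fun l => l[i]?) h1
    have hif : i < (f : ℕ → ℕ) m + 1 := by omega
    have hif' : i < (f' : ℕ → ℕ) m + 1 := by rw [← hfval m hm]; omega
    simpa [List.getElem?_map, List.getElem?_range, hif, hif'] using h2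
  -- apply the disagreement hypothesis
  have hfne : (f : ℕ → ℕ) ≠ (f' : ℕ → ℕ) := fun hv => hne (Subtype.ext hv)
  obtain ⟨n, y, hy, hy', hdist⟩ := hdis f (hFH f.2) f' (hFH f'.2) hfne
  have hy2 := hy
  obtain ⟨i, hi, hxy⟩ := hy2
  rcases lt_or_ge n (K f) with hcase | hcase
  · -- `n < K f` : use the codes
    have hi' : i ≤ (f' : ℕ → ℕ) n := hfval n hcase ▸ hi
    have hc1 := hc f n i
    have hc2 := hc f' n i
    have hmin1 : min i ((f : ℕ → ℕ) n) = i := min_eq_left hi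
    have hmin2 : min i ((f' : ℕ → ℕ) n) = i := min_eq_left hi'
    have e1 : x n (min i ((f : ℕ → ℕ) n)) = y := by rw [hmin1]; exact hxy
    have e2 : x n (min i ((f' : ℕ → ℕ) n)) = y := by rw [hmin2]; exact hxy
    have E1 : h f n ⟨x n (min i ((f : ℕ → ℕ) n)),
          ⟨min i ((f : ℕ → ℕ) n), min_le_right _ _, rfl⟩⟩ =
        h f n ⟨y, hy⟩ := subtype_app_congr (h (f : ℕ → ℕ) n) _ _ e1
    have E2 : h f' n ⟨x n (min i ((f' : ℕ → ℕ) n)),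
          ⟨min i ((f' : ℕ → ℕ) n), min_le_right _ _, rfl⟩⟩ =
        h f' n ⟨y, hy'⟩ := subtype_app_congr (h (f' : ℕ → ℕ) n) _ _ e2
    rw [E1] at hc1
    rw [E2] at hc2
    rw [hcval n hcase i hi] at hc1
    have htri : dist (h f n ⟨y, hy⟩) (h f' n ⟨y, hy'⟩) ≤
        dist (h f n ⟨y, hy⟩) (u n (c f' n i)) + dist (u n (c f' n i)) (h f' n ⟨y, hy'⟩) :=
      dist_triangle _ _ _
    rw [dist_comm (u n (c f' n i))] at htri
    linarith
  · -- `n ≥ K f` : both are `ε/2`-close to `h g`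
    have hcase' : K f' ≤ n := ek ▸ hcase
    have hK1 := hK f n hcase
    have hK2 := hK f' n hcase'
    have hy2' := hy'
    obtain ⟨i', hi'', hxy'⟩ := hy2'
    have qy : y ∈ Mseg x n (g n) := ⟨i, hi.trans hK1.1, hxy⟩
    have d1 := hK1.2 i hi ⟨i, hi, rfl⟩ ⟨i, hi.trans hK1.1, rfl⟩
    have d2 := hK2.2 i' hi'' ⟨i', hi'', rfl⟩ ⟨i', hi''.trans hK2.1, rfl⟩
    have E1 : h f n ⟨x n i, ⟨i, hi, rfl⟩⟩ = h f n ⟨y, hy⟩ :=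
      subtype_app_congr (h (f : ℕ → ℕ) n) _ _ hxy
    have E2 : h g n ⟨x n i, ⟨i, hi.trans hK1.1, rfl⟩⟩ = h g n ⟨y, qy⟩ :=
      subtype_app_congr (h g n) _ _ hxy
    have E3 : h f' n ⟨x n i', ⟨i', hi'', rfl⟩⟩ = h f' n ⟨y, hy'⟩ :=
      subtype_app_congr (h (f' : ℕ → ℕ) n) _ _ hxy'
    have E4 : h g n ⟨x n i', ⟨i', hi''.trans hK2.1, rfl⟩⟩ = h g n ⟨y, qy⟩ :=
      subtype_app_congr (h g n) _ _ hxy'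
    rw [E1, E2] at d1
    rw [E3, E4] at d2
    have htri : dist (h f n ⟨y, hy⟩) (h f' n ⟨y, hy'⟩) ≤
        dist (h f n ⟨y, hy⟩) (h g n ⟨y, qy⟩) + dist (h g n ⟨y, qy⟩) (h f' n ⟨y, hy'⟩) :=
      dist_triangle _ _ _
    rw [dist_comm (h g n ⟨y, qy⟩) (h f' n ⟨y, hy'⟩)] at htri
    linarith
end
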